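/- Let A be a bounded linear operator on a complex Hilbert space H, K a nonempty set of unit vectors, ber(T)=sup_{k∈K}|⟨T k,k⟩|, ‖T‖_ber = sup_{k,l∈K}|⟨T k,l⟩|. Then ‖A A* − A*A‖_ber ≤ ber(A*A + A A*). -/

import Mathlib

open ContinuousLinearMap

noncomputable def berNum {H : Type*} [NormedAddCommGroup H] [InnerProductSpace ℂ H]
    (K : Set H) (T : H →L[ℂ] H) : ℝ :=
  sSup {x : ℝ | ∃ k ∈ K, x = ‖(inner ℂ (T k) k : ℂ)‖}

noncomputable def berNorm {H : Type*} [NormedAddCommGroup H] [InnerProductSpace ℂ H]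
    (K : Set H) (T : H →L[ℂ] H) : ℝ :=
  sSup {x : ℝ | ∃ k ∈ K, ∃ l ∈ K, x = ‖(inner ℂ (T k) l : ℂ)‖}

theorem berNorm_commutator {H : Type*} [NormedAddCommGroup H] [InnerProductSpace ℂ H] [CompleteSpace H]
    (A : H →L[ℂ] H) (K : Set H) (hK : K.Nonempty) (hK1 : ∀ k ∈ K, ‖k‖ = 1) :
    berNorm K (A * adjoint A - adjoint A * A) ≤ berNum K (adjoint A * A + A * adjoint A) := by
  set S := adjoint A * A + A * adjoint A with hS
  have hnum : ∀ k ∈ K, (inner ℂ (S k) k : ℂ) = ((‖A k‖^2 + ‖adjoint A k‖^2 : ℝ) : ℂ) := by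
    intro k hk
    have h1 : (inner ℂ ((adjoint A) (A k)) k : ℂ) = inner ℂ (A k) (A k) := adjoint_inner_left A k (A k)
    have h2 : (inner ℂ (A ((adjoint A) k)) k : ℂ) = inner ℂ (adjoint A k) (adjoint A k) :=
      (adjoint_inner_right A (adjoint A k) k).symm
    simp only [hS, add_apply, mul_apply_eq_comp, inner_add_left, h1, h2,
      inner_self_eq_norm_sq_to_K]
    norm_cast
  have hnorm : ∀ k ∈ K, ‖(inner ℂ (S k) k : ℂ)‖ = ‖A k‖^2 + ‖adjoint A k‖^2 := by
    intro k hk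
    rw [hnum k hk]
    rw [Complex.norm_real]
    exact abs_of_nonneg (by positivity)
  have hbdd : BddAbove {x : ℝ | ∃ k ∈ K, x = ‖(inner ℂ (S k) k : ℂ)‖} := by
    refine ⟨‖S‖, ?_⟩
    rintro x ⟨k, hk, rfl⟩
    calc ‖(inner ℂ (S k) k : ℂ)‖ ≤ ‖S k‖ * ‖k‖ := norm_inner_le_norm _ _
      _ ≤ ‖S‖ * ‖k‖ * ‖k‖ := by
          have := S.le_opNorm k
          have h0 : (0:ℝ) ≤ ‖k‖ := norm_nonneg _
          nlinarith
      _ = ‖S‖ := by rw [hK1 k hk]; ring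
  set M := berNum K S with hM
  have hle : ∀ k ∈ K, ‖A k‖^2 + ‖adjoint A k‖^2 ≤ M := by
    intro k hk
    have : ‖(inner ℂ (S k) k : ℂ)‖ ∈ {x : ℝ | ∃ k ∈ K, x = ‖(inner ℂ (S k) k : ℂ)‖} :=
      ⟨k, hk, rfl⟩
    have := le_csSup hbdd this
    rwa [hnorm k hk] at this
  have hM0 : 0 ≤ M := by
    obtain ⟨k, hk⟩ := hK
    exact le_trans (by positivity) (hle k hk)
  apply Real.sSup_le _ hM0
  rintro x ⟨k, hk, l, hl, rfl⟩
  have hcomm : (inner ℂ ((A * adjoint A - adjoint A * A) k) l : ℂ)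
      = inner ℂ (adjoint A k) (adjoint A l) - inner ℂ (A k) (A l) := by
    simp only [sub_apply, mul_apply_eq_comp, inner_sub_left]
    rw [(adjoint_inner_right A (adjoint A k) l).symm, adjoint_inner_left A l (A k)]
  rw [hcomm]
  have hCS1 : ‖(inner ℂ (adjoint A k) (adjoint A l) : ℂ)‖ ≤ ‖adjoint A k‖ * ‖adjoint A l‖ :=
    norm_inner_le_norm _ _
  have hCS2 : ‖(inner ℂ (A k) (A l) : ℂ)‖ ≤ ‖A k‖ * ‖A l‖ := norm_inner_le_norm _ _
  have htri := norm_sub_le (inner ℂ (adjoint A k) (adjoint A l) : ℂ) (inner ℂ (A k) (A l))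
  have hk' := hle k hk
  have hl' := hle l hl
  nlinarith [sq_nonneg (‖adjoint A k‖ - ‖adjoint A l‖), sq_nonneg (‖A k‖ - ‖A l‖)]
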